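/- Let v_1 < ... < v_n be points on a line with metric d(u,v) = |u−v|, and let A[p, s, a, b] denote the minimum cost of a tree rooted at v_s of depth at most p spanning all points v_i with i ∈ [a, b] (where s ∉ [a, b]), with A[p, s, a, b] = 0 when a > b. Then for p = 1, A[1, s, a, b] = Σ_{x ∈ [a,b]} d(v_s, v_x); and for p > 1 and a ≤ b, A[p, s, a, b] = min over s' ∈ [a, b] and c ∈ [a, s'] of ( d(v_{s'}, v_s) + A[p, s, a, c−1] + A[p−1, s', c, s'−1] + A[p−1, s', s'+1, b] ). -/

import Mathlib

open Finset

/-- A rooted tree on a finite vertex set, encoded by a parent map and a depth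
function. Depth consistency (`depth v = depth (parent v) + 1` for non-root
vertices, depth 0 only at the root) makes this exactly a rooted tree. -/
structure KTree (V : Type) where
  verts : Finset V
  root : V
  root_mem : root ∈ verts
  parent : V → V
  depth : V → ℕ
  parent_mem : ∀ v ∈ verts, v ≠ root → parent v ∈ verts
  depth_root : depth root = 0
  root_of_depth_zero : ∀ v ∈ verts, depth v = 0 → v = root
  depth_parent : ∀ v ∈ verts, v ≠ root → depth v = depth (parent v) + 1

/-- The cost of a rooted tree: the sum over non-root vertices of the distance
to the parent (i.e. the sum of edge costs). -/
def KTree.cost {V : Type} [DecidableEq V] (d : V → V → ℝ) (T : KTree V) : ℝ :=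
  ∑ v ∈ T.verts.erase T.root, d v (T.parent v)

/-- The tree has depth (hops) at most `k`. -/
def KTree.IsKHop {V : Type} (T : KTree V) (k : ℕ) : Prop :=
  ∀ v ∈ T.verts, T.depth v ≤ k

/-- `lineA f p s a b`: the minimum cost of a tree rooted at point s of depth at
most p spanning exactly the points with indices in [a,b] (positions given by
f), on the line metric d i j = |f i - f j|. -/
noncomputable def lineA (f : ℤ → ℝ) (p : ℕ) (s a b : ℤ) : ℝ :=
  sInf {c : ℝ | ∃ T : KTree ℤ, T.root = s ∧ T.verts = insert s (Finset.Icc a b) ∧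
    T.IsKHop p ∧ T.cost (fun i j => |f i - f j|) = c}

namespace Stmt13

/-- A "configuration": a flat encoding of an admissible tree for the instance
`(p, s, a, b)`. -/
structure Conf (p : ℕ) (s a b : ℤ) where
  par : ℤ → ℤ
  dep : ℤ → ℕ
  dep_pos : ∀ x ∈ Finset.Icc a b, 1 ≤ dep x
  dep_le : ∀ x ∈ Finset.Icc a b, dep x ≤ p
  par_root : ∀ x ∈ Finset.Icc a b, dep x = 1 → par x = s
  par_mem : ∀ x ∈ Finset.Icc a b, dep x ≠ 1 → par x ∈ Finset.Icc a b
  par_dep : ∀ x ∈ Finset.Icc a b, dep x ≠ 1 → dep (par x) + 1 = dep x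

noncomputable def Conf.cost (f : ℤ → ℝ) {p : ℕ} {s a b : ℤ} (c : Conf p s a b) : ℝ :=
  ∑ x ∈ Finset.Icc a b, |f x - f (c.par x)|

noncomputable def Conf.pot (f : ℤ → ℝ) {p : ℕ} {s a b : ℤ} (c : Conf p s a b) : ℝ :=
  ∑ x ∈ Finset.Icc a b, (f x - f (c.par x))^2

def confSet (f : ℤ → ℝ) (p : ℕ) (s a b : ℤ) : Set ℝ :=
  {r | ∃ c : Conf p s a b, Conf.cost f c = r}

theorem conf_cost_nonneg (f : ℤ → ℝ) {p : ℕ} {s a b : ℤ} (c : Conf p s a b) :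
    0 ≤ c.cost f :=
  Finset.sum_nonneg fun _ _ => abs_nonneg _

/-- From a `Conf` build a `KTree`. -/
noncomputable def Conf.toKTree {p : ℕ} {s a b : ℤ} (hs : s ∉ Finset.Icc a b) (c : Conf p s a b) :
    KTree ℤ where
  verts := insert s (Finset.Icc a b)
  root := s
  root_mem := Finset.mem_insert_self _ _
  parent := fun x => if x ∈ Finset.Icc a b then c.par x else s
  depth := fun x => if x ∈ Finset.Icc a b then c.dep x else 0
  parent_mem := by
    intro v hv hvne
    have hv' : v ∈ Finset.Icc a b := by
      rcases Finset.mem_insert.1 hv with h | h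
      · exact absurd h hvne
      · exact h
    simp only [hv', if_true]
    by_cases h1 : c.dep v = 1
    · rw [c.par_root v hv' h1]; exact Finset.mem_insert_self _ _
    · exact Finset.mem_insert_of_mem (c.par_mem v hv' h1)
  depth_root := by simp [hs]
  root_of_depth_zero := by
    intro v hv hd
    by_cases h : v ∈ Finset.Icc a b
    · rw [if_pos h] at hd
      have := c.dep_pos v h; omega
    · rcases Finset.mem_insert.1 hv with h' | h'
      · exact h'
      · exact absurd h' h
  depth_parent := by
    intro v hv hvne
    have hv' : v ∈ Finset.Icc a b := by
      rcases Finset.mem_insert.1 hv with h | h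
      · exact absurd h hvne
      · exact h
    simp only [hv', if_true]
    by_cases h1 : c.dep v = 1
    · rw [c.par_root v hv' h1, if_neg hs, h1]
    · have hm := c.par_mem v hv' h1
      rw [if_pos hm]
      exact (c.par_dep v hv' h1).symm

theorem Conf.toKTree_cost (f : ℤ → ℝ) {p : ℕ} {s a b : ℤ} (hs : s ∉ Finset.Icc a b)
    (c : Conf p s a b) :
    (c.toKTree hs).cost (fun i j => |f i - f j|) = c.cost f := by
  unfold KTree.cost Conf.cost Conf.toKTree
  simp only
  rw [Finset.erase_insert hs]
  refine Finset.sum_congr rfl fun x hx => ?_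
  rw [if_pos hx]

/-- The `lineA` infimum can be computed over configurations. -/
theorem lineA_eq_conf (f : ℤ → ℝ) (p : ℕ) (s a b : ℤ) (hs : s ∉ Finset.Icc a b) :
    lineA f p s a b = sInf (confSet f p s a b) := by
  unfold lineA confSet
  congr 1
  ext r
  constructor
  · rintro ⟨T, hroot, hverts, hhop, hcost⟩
    have hmem : ∀ x ∈ Finset.Icc a b, x ∈ T.verts := by
      intro x hx; rw [hverts]; exact Finset.mem_insert_of_mem hx
    have hne : ∀ x ∈ Finset.Icc a b, x ≠ T.root := by
      intro x hx h; rw [hroot] at h; exact hs (h ▸ hx)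
    have hdep1 : ∀ x ∈ Finset.Icc a b, 1 ≤ T.depth x := by
      intro x hx
      rcases Nat.eq_zero_or_pos (T.depth x) with h | h
      · exact absurd (T.root_of_depth_zero x (hmem x hx) h) (hne x hx)
      · exact h
    refine ⟨⟨T.parent, T.depth, hdep1, fun x hx => hhop x (hmem x hx), ?_, ?_, ?_⟩, ?_⟩
    · -- par_root
      intro x hx h1
      have hp := T.depth_parent x (hmem x hx) (hne x hx)
      rw [h1] at hp
      have hdp : T.depth (T.parent x) = 0 := by omega
      have hpm := T.parent_mem x (hmem x hx) (hne x hx)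
      have := T.root_of_depth_zero _ hpm hdp
      rw [this, hroot]
    · -- par_mem
      intro x hx h1
      have hp := T.depth_parent x (hmem x hx) (hne x hx)
      have hpm := T.parent_mem x (hmem x hx) (hne x hx)
      rw [hverts] at hpm
      rcases Finset.mem_insert.1 hpm with h | h
      · exfalso
        have : T.depth (T.parent x) = 0 := by rw [h, ← hroot, T.depth_root]
        omega
      · exact h
    · -- par_dep
      intro x hx h1
      exact (T.depth_parent x (hmem x hx) (hne x hx)).symm
    · -- cost
      rw [← hcost]
      unfold KTree.cost Conf.cost
      have he : T.verts.erase T.root = Finset.Icc a b := by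
        rw [hroot, hverts]; exact Finset.erase_insert hs
      rw [he]
  · rintro ⟨c, hcost⟩
    exact ⟨c.toKTree hs, rfl, rfl, by
      intro v hv
      unfold Conf.toKTree
      simp only
      by_cases h : v ∈ Finset.Icc a b
      · rw [if_pos h]; exact c.dep_le v h
      · rw [if_neg h]; exact Nat.zero_le _, by rw [Conf.toKTree_cost f hs c, hcost]⟩

/-- Star configuration. -/
def starConf (p : ℕ) (s a b : ℤ) (hp : 1 ≤ p) : Conf p s a b where
  par := fun _ => s
  dep := fun _ => 1
  dep_pos := fun _ _ => le_refl _
  dep_le := fun _ _ => hp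
  par_root := fun _ _ _ => rfl
  par_mem := fun x _ h => absurd rfl h
  par_dep := fun x _ h => absurd rfl h

theorem confSet_nonempty (f : ℤ → ℝ) (p : ℕ) (s a b : ℤ) (hp : 1 ≤ p) :
    (confSet f p s a b).Nonempty :=
  ⟨_, starConf p s a b hp, rfl⟩

theorem confSet_nonneg (f : ℤ → ℝ) (p : ℕ) (s a b : ℤ) :
    ∀ r ∈ confSet f p s a b, 0 ≤ r := by
  rintro r ⟨c, rfl⟩; exact conf_cost_nonneg f c

theorem lineA_nonneg (f : ℤ → ℝ) (p : ℕ) (s a b : ℤ) : 0 ≤ lineA f p s a b := by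
  apply Real.sInf_nonneg
  rintro r ⟨T, _, _, _, rfl⟩
  exact Finset.sum_nonneg fun _ _ => abs_nonneg _


/-- The parent map with membership proofs, as a function between finite types. -/
noncomputable def Conf.key {p : ℕ} {s a b : ℤ} (c : Conf p s a b) :
    {x // x ∈ Finset.Icc a b} → {y // y ∈ insert s (Finset.Icc a b)} :=
  fun x => ⟨c.par x.1, by
    by_cases h : c.dep x.1 = 1
    · rw [c.par_root x.1 x.2 h]; exact Finset.mem_insert_self _ _
    · exact Finset.mem_insert_of_mem (c.par_mem x.1 x.2 h)⟩

theorem Conf.cost_eq_key (f : ℤ → ℝ) {p : ℕ} {s a b : ℤ} (c : Conf p s a b) :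
    c.cost f = ∑ x ∈ (Finset.Icc a b).attach, |f x.1 - f (c.key x).1| := by
  rw [Conf.cost, ← Finset.sum_attach (Finset.Icc a b) (fun x => |f x - f (c.par x)|)]
  rfl

theorem Conf.pot_eq_key (f : ℤ → ℝ) {p : ℕ} {s a b : ℤ} (c : Conf p s a b) :
    c.pot f = ∑ x ∈ (Finset.Icc a b).attach, (f x.1 - f (c.key x).1)^2 := by
  rw [Conf.pot, ← Finset.sum_attach (Finset.Icc a b) (fun x => (f x - f (c.par x))^2)]
  rfl

theorem pair_finite (f : ℤ → ℝ) (p : ℕ) (s a b : ℤ) :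
    (Set.range (fun c : Conf p s a b => (c.cost f, c.pot f))).Finite := by
  classical
  have hsub : Set.range (fun c : Conf p s a b => (c.cost f, c.pot f)) ⊆
      Set.range (fun g : {x // x ∈ Finset.Icc a b} → {y // y ∈ insert s (Finset.Icc a b)} =>
        (∑ x ∈ (Finset.Icc a b).attach, |f x.1 - f (g x).1|,
         ∑ x ∈ (Finset.Icc a b).attach, (f x.1 - f (g x).1)^2)) := by
    rintro r ⟨c, rfl⟩
    exact ⟨c.key, by
      simp only
      rw [Conf.cost_eq_key f c, Conf.pot_eq_key f c]⟩
  exact (Set.finite_range _).subset hsub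

theorem confSet_finite (f : ℤ → ℝ) (p : ℕ) (s a b : ℤ) : (confSet f p s a b).Finite := by
  refine ((pair_finite f p s a b).image Prod.fst).subset ?_
  rintro r ⟨c, rfl⟩
  exact ⟨_, ⟨c, rfl⟩, rfl⟩

theorem confSet_bddBelow (f : ℤ → ℝ) (p : ℕ) (s a b : ℤ) : BddBelow (confSet f p s a b) :=
  ⟨0, fun r hr => confSet_nonneg f p s a b r hr⟩

theorem lineA_le_cost (f : ℤ → ℝ) {p : ℕ} {s a b : ℤ} (hs : s ∉ Finset.Icc a b)
    (c : Conf p s a b) : lineA f p s a b ≤ c.cost f := by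
  rw [lineA_eq_conf f p s a b hs]
  exact csInf_le (confSet_bddBelow f p s a b) ⟨c, rfl⟩

theorem lineA_attained (f : ℤ → ℝ) {p : ℕ} {s a b : ℤ} (hp : 1 ≤ p)
    (hs : s ∉ Finset.Icc a b) :
    ∃ c : Conf p s a b, c.cost f = lineA f p s a b := by
  rw [lineA_eq_conf f p s a b hs]
  exact ((confSet_nonempty f p s a b hp).csInf_mem (confSet_finite f p s a b))

/-- Existence of a lexicographically (cost, pot) minimal configuration. -/
theorem exists_lexmin (f : ℤ → ℝ) (p : ℕ) (s a b : ℤ) (hp : 1 ≤ p) :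
    ∃ c : Conf p s a b, (∀ c' : Conf p s a b, c.cost f ≤ c'.cost f) ∧
      (∀ c' : Conf p s a b, c'.cost f = c.cost f → c.pot f ≤ c'.pot f) := by
  classical
  obtain ⟨c1, hc1⟩ := (confSet_nonempty f p s a b hp).csInf_mem (confSet_finite f p s a b)
  have hc1min : ∀ c' : Conf p s a b, c1.cost f ≤ c'.cost f := by
    intro c'
    rw [hc1]; exact csInf_le (confSet_bddBelow f p s a b) ⟨c', rfl⟩
  set S2 : Set ℝ := {r | ∃ c : Conf p s a b, c.cost f = c1.cost f ∧ c.pot f = r} with hS2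
  have hS2fin : S2.Finite := by
    refine ((pair_finite f p s a b).image Prod.snd).subset ?_
    rintro r ⟨c, hc, rfl⟩
    exact ⟨_, ⟨c, rfl⟩, rfl⟩
  have hS2ne : S2.Nonempty := ⟨c1.pot f, c1, rfl, rfl⟩
  obtain ⟨c2, hcost2, hpot2⟩ := hS2ne.csInf_mem hS2fin
  refine ⟨c2, fun c' => hcost2 ▸ hc1min c', fun c' hc' => ?_⟩
  rw [hpot2]
  exact csInf_le hS2fin.bddBelow ⟨c', by rw [hc', hcost2], rfl⟩


theorem sum_Icc_split (g : ℤ → ℝ) (u v w : ℤ) (h1 : u ≤ v + 1) (h2 : v ≤ w) :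
    ∑ x ∈ Finset.Icc u w, g x = (∑ x ∈ Finset.Icc u v, g x) + ∑ x ∈ Finset.Icc (v+1) w, g x := by
  have hu : Finset.Icc u w = Finset.Icc u v ∪ Finset.Icc (v+1) w := by
    ext x
    simp only [Finset.mem_Icc, Finset.mem_union]
    omega
  rw [hu, Finset.sum_union]
  refine Finset.disjoint_left.2 fun x hx1 hx2 => ?_
  simp only [Finset.mem_Icc] at hx1 hx2
  omega

/-- Trivial configuration for an empty interval. -/
def emptyConf (p : ℕ) (s a b : ℤ) (hba : b < a) : Conf p s a b where
  par := fun _ => s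
  dep := fun _ => 1
  dep_pos := fun x hx => absurd hx (by simp [Finset.Icc_eq_empty (by omega : ¬ a ≤ b)])
  dep_le := fun x hx => absurd hx (by simp [Finset.Icc_eq_empty (by omega : ¬ a ≤ b)])
  par_root := fun x hx _ => absurd hx (by simp [Finset.Icc_eq_empty (by omega : ¬ a ≤ b)])
  par_mem := fun x hx _ => absurd hx (by simp [Finset.Icc_eq_empty (by omega : ¬ a ≤ b)])
  par_dep := fun x hx _ => absurd hx (by simp [Finset.Icc_eq_empty (by omega : ¬ a ≤ b)])

theorem lineA_empty (f : ℤ → ℝ) (p : ℕ) (s a b : ℤ) (hba : b < a) :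
    lineA f p s a b = 0 := by
  have hs : s ∉ Finset.Icc a b := by
    simp [Finset.Icc_eq_empty (by omega : ¬ a ≤ b)]
  rw [lineA_eq_conf f p s a b hs]
  apply le_antisymm
  · have : (emptyConf p s a b hba).cost f = 0 := by
      rw [Conf.cost, Finset.Icc_eq_empty (by omega : ¬ a ≤ b), Finset.sum_empty]
    exact this ▸ csInf_le (confSet_bddBelow f p s a b) ⟨emptyConf p s a b hba, rfl⟩
  · exact le_csInf ⟨_, emptyConf p s a b hba, rfl⟩ (confSet_nonneg f p s a b)

theorem lineA_one (f : ℤ → ℝ) (s a b : ℤ) (hs : s ∉ Finset.Icc a b) :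
    lineA f 1 s a b = ∑ x ∈ Finset.Icc a b, |f s - f x| := by
  rw [lineA_eq_conf f 1 s a b hs]
  have hset : confSet f 1 s a b = {∑ x ∈ Finset.Icc a b, |f s - f x|} := by
    ext r
    constructor
    · rintro ⟨c, rfl⟩
      have : c.cost f = ∑ x ∈ Finset.Icc a b, |f s - f x| := by
        rw [Conf.cost]
        refine Finset.sum_congr rfl fun x hx => ?_
        have h1 : c.dep x = 1 := le_antisymm (c.dep_le x hx) (c.dep_pos x hx)
        rw [c.par_root x hx h1, abs_sub_comm]
      simp [this]
    · rintro rfl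
      refine ⟨starConf 1 s a b le_rfl, ?_⟩
      rw [Conf.cost]
      exact Finset.sum_congr rfl fun x _ => by rw [abs_sub_comm]; rfl
  rw [hset, csInf_singleton]

section Glue
variable (f : ℤ → ℝ) {p : ℕ} {s a b s' c' : ℤ}

/-- Glue three sub-configurations into one for `(p, s, a, b)`. -/
def glueConf (hp : 2 ≤ p) (hs' : s' ∈ Finset.Icc a b) (hc' : c' ∈ Finset.Icc a s')
    (C1 : Conf p s a (c'-1)) (C2 : Conf (p-1) s' c' (s'-1)) (C3 : Conf (p-1) s' (s'+1) b) :
    Conf p s a b where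
  par := fun x => if x = s' then s else if x ≤ c' - 1 then C1.par x
    else if x ≤ s' - 1 then C2.par x else C3.par x
  dep := fun x => if x = s' then 1 else if x ≤ c' - 1 then C1.dep x
    else if x ≤ s' - 1 then C2.dep x + 1 else C3.dep x + 1
  dep_pos := by
    obtain ⟨hsa, hsb⟩ := Finset.mem_Icc.1 hs'
    obtain ⟨hca, hcb⟩ := Finset.mem_Icc.1 hc'
    intro x hx
    obtain ⟨hx1, hx2⟩ := Finset.mem_Icc.1 hx
    by_cases h0 : x = s'
    · rw [if_pos h0]
    rw [if_neg h0]
    by_cases h1 : x ≤ c' - 1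
    · rw [if_pos h1]
      exact C1.dep_pos x (Finset.mem_Icc.2 (by omega))
    rw [if_neg h1]
    by_cases h2 : x ≤ s' - 1
    · rw [if_pos h2]; omega
    · rw [if_neg h2]; omega
  dep_le := by
    obtain ⟨hsa, hsb⟩ := Finset.mem_Icc.1 hs'
    obtain ⟨hca, hcb⟩ := Finset.mem_Icc.1 hc'
    intro x hx
    obtain ⟨hx1, hx2⟩ := Finset.mem_Icc.1 hx
    by_cases h0 : x = s'
    · rw [if_pos h0]; omega
    rw [if_neg h0]
    by_cases h1 : x ≤ c' - 1
    · rw [if_pos h1]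
      exact C1.dep_le x (Finset.mem_Icc.2 (by omega))
    rw [if_neg h1]
    by_cases h2 : x ≤ s' - 1
    · rw [if_pos h2]
      have := C2.dep_le x (Finset.mem_Icc.2 (by omega))
      omega
    · rw [if_neg h2]
      have := C3.dep_le x (Finset.mem_Icc.2 (by omega))
      omega
  par_root := by
    obtain ⟨hsa, hsb⟩ := Finset.mem_Icc.1 hs'
    obtain ⟨hca, hcb⟩ := Finset.mem_Icc.1 hc'
    intro x hx hd
    obtain ⟨hx1, hx2⟩ := Finset.mem_Icc.1 hx
    by_cases h0 : x = s'
    · rw [if_pos h0]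
    rw [if_neg h0] at hd ⊢
    by_cases h1 : x ≤ c' - 1
    · rw [if_pos h1] at hd ⊢
      exact C1.par_root x (Finset.mem_Icc.2 (by omega)) hd
    rw [if_neg h1] at hd ⊢
    by_cases h2 : x ≤ s' - 1
    · rw [if_pos h2] at hd
      have := C2.dep_pos x (Finset.mem_Icc.2 (by omega : c' ≤ x ∧ x ≤ s' - 1))
      omega
    · rw [if_neg h2] at hd
      have := C3.dep_pos x (Finset.mem_Icc.2 (by omega : s' + 1 ≤ x ∧ x ≤ b))
      omega
  par_mem := by
    obtain ⟨hsa, hsb⟩ := Finset.mem_Icc.1 hs'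
    obtain ⟨hca, hcb⟩ := Finset.mem_Icc.1 hc'
    intro x hx hd
    obtain ⟨hx1, hx2⟩ := Finset.mem_Icc.1 hx
    by_cases h0 : x = s'
    · rw [if_pos h0] at hd; omega
    rw [if_neg h0] at hd ⊢
    by_cases h1 : x ≤ c' - 1
    · rw [if_pos h1] at hd ⊢
      have := C1.par_mem x (Finset.mem_Icc.2 (by omega)) hd
      simp only [Finset.mem_Icc] at this ⊢
      omega
    rw [if_neg h1] at hd ⊢
    by_cases h2 : x ≤ s' - 1
    · rw [if_pos h2] at hd ⊢
      by_cases hd2 : C2.dep x = 1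
      · rw [C2.par_root x (Finset.mem_Icc.2 (by omega)) hd2]
        simp only [Finset.mem_Icc]; omega
      · have := C2.par_mem x (Finset.mem_Icc.2 (by omega)) hd2
        simp only [Finset.mem_Icc] at this ⊢
        omega
    · rw [if_neg h2] at hd ⊢
      by_cases hd3 : C3.dep x = 1
      · rw [C3.par_root x (Finset.mem_Icc.2 (by omega)) hd3]
        simp only [Finset.mem_Icc]; omega
      · have := C3.par_mem x (Finset.mem_Icc.2 (by omega)) hd3
        simp only [Finset.mem_Icc] at this ⊢
        omega
  par_dep := by
    obtain ⟨hsa, hsb⟩ := Finset.mem_Icc.1 hs'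
    obtain ⟨hca, hcb⟩ := Finset.mem_Icc.1 hc'
    intro x hx hd
    obtain ⟨hx1, hx2⟩ := Finset.mem_Icc.1 hx
    by_cases h0 : x = s'
    · rw [if_pos h0] at hd; omega
    rw [if_neg h0] at hd ⊢
    conv_rhs => rw [if_neg h0]
    by_cases h1 : x ≤ c' - 1
    · rw [if_pos h1] at hd ⊢
      conv_rhs => rw [if_pos h1]
      have hm := C1.par_mem x (Finset.mem_Icc.2 (by omega)) hd
      simp only [Finset.mem_Icc] at hm
      rw [if_neg (by omega : ¬ C1.par x = s'), if_pos (by omega : C1.par x ≤ c' - 1)]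
      exact C1.par_dep x (Finset.mem_Icc.2 (by omega)) hd
    rw [if_neg h1] at hd ⊢
    conv_rhs => rw [if_neg h1]
    by_cases h2 : x ≤ s' - 1
    · rw [if_pos h2] at hd ⊢
      conv_rhs => rw [if_pos h2]
      by_cases hd2 : C2.dep x = 1
      · rw [C2.par_root x (Finset.mem_Icc.2 (by omega)) hd2, if_pos rfl, hd2]
      · have hm := C2.par_mem x (Finset.mem_Icc.2 (by omega)) hd2
        simp only [Finset.mem_Icc] at hm
        rw [if_neg (by omega : ¬ C2.par x = s'), if_neg (by omega : ¬ C2.par x ≤ c' - 1),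
          if_pos (by omega : C2.par x ≤ s' - 1)]
        have := C2.par_dep x (Finset.mem_Icc.2 (by omega)) hd2
        omega
    · rw [if_neg h2] at hd ⊢
      conv_rhs => rw [if_neg h2]
      by_cases hd3 : C3.dep x = 1
      · rw [C3.par_root x (Finset.mem_Icc.2 (by omega)) hd3, if_pos rfl, hd3]
      · have hm := C3.par_mem x (Finset.mem_Icc.2 (by omega)) hd3
        simp only [Finset.mem_Icc] at hm
        rw [if_neg (by omega : ¬ C3.par x = s'), if_neg (by omega : ¬ C3.par x ≤ c' - 1),
          if_neg (by omega : ¬ C3.par x ≤ s' - 1)]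
        have := C3.par_dep x (Finset.mem_Icc.2 (by omega)) hd3
        omega

theorem glueConf_cost (hp : 2 ≤ p) (hs' : s' ∈ Finset.Icc a b) (hc' : c' ∈ Finset.Icc a s')
    (C1 : Conf p s a (c'-1)) (C2 : Conf (p-1) s' c' (s'-1)) (C3 : Conf (p-1) s' (s'+1) b) :
    (glueConf hp hs' hc' C1 C2 C3).cost f =
      |f s' - f s| + C1.cost f + C2.cost f + C3.cost f := by
  set G := glueConf hp hs' hc' C1 C2 C3 with hG
  obtain ⟨hsa, hsb⟩ := Finset.mem_Icc.1 hs'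
  obtain ⟨hca, hcb⟩ := Finset.mem_Icc.1 hc'
  rw [Conf.cost]
  rw [sum_Icc_split _ a (s'-1) b (by omega) (by omega)]
  rw [sum_Icc_split _ a (c'-1) (s'-1) (by omega) (by omega)]
  rw [show c' - 1 + 1 = c' from by ring, show s' - 1 + 1 = s' from by ring]
  rw [sum_Icc_split _ s' s' b (by omega) (by omega)]
  rw [Finset.Icc_self, Finset.sum_singleton]
  have hgs' : |f s' - f (G.par s')| = |f s' - f s| := by
    have h : G.par s' = s := by
      show (if s' = s' then s else _) = s
      rw [if_pos rfl]
    rw [h]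
  have h1 : ∑ x ∈ Finset.Icc a (c'-1), |f x - f (G.par x)| = C1.cost f := by
    rw [Conf.cost]
    refine Finset.sum_congr rfl fun x hx => ?_
    obtain ⟨hx1, hx2⟩ := Finset.mem_Icc.1 hx
    have h : G.par x = C1.par x := by
      show (if x = s' then s else if x ≤ c' - 1 then _ else _) = _
      rw [if_neg (by omega), if_pos (by omega)]
    rw [h]
  have h2 : ∑ x ∈ Finset.Icc c' (s'-1), |f x - f (G.par x)| = C2.cost f := by
    rw [Conf.cost]
    refine Finset.sum_congr rfl fun x hx => ?_
    obtain ⟨hx1, hx2⟩ := Finset.mem_Icc.1 hx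
    have h : G.par x = C2.par x := by
      show (if x = s' then s else if x ≤ c' - 1 then _ else if x ≤ s' - 1 then _ else _) = _
      rw [if_neg (by omega), if_neg (by omega), if_pos (by omega)]
    rw [h]
  have h3 : ∑ x ∈ Finset.Icc (s'+1) b, |f x - f (G.par x)| = C3.cost f := by
    rw [Conf.cost]
    refine Finset.sum_congr rfl fun x hx => ?_
    obtain ⟨hx1, hx2⟩ := Finset.mem_Icc.1 hx
    have h : G.par x = C3.par x := by
      show (if x = s' then s else if x ≤ c' - 1 then _ else if x ≤ s' - 1 then _ else _) = _
      rw [if_neg (by omega), if_neg (by omega), if_neg (by omega)]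
    rw [h]
  rw [hgs', h1, h2, h3]
  ring

end Glue


section Chains
variable {p : ℕ} {s a b : ℤ}

/-- Chain iterates stay in the interval, with depth dropping by one per step. -/
theorem chain_mem (c : Conf p s a b) (x : ℤ) (hx : x ∈ Finset.Icc a b) :
    ∀ k : ℕ, k + 1 ≤ c.dep x →
      c.par^[k] x ∈ Finset.Icc a b ∧ c.dep (c.par^[k] x) + k = c.dep x := by
  intro k
  induction k with
  | zero =>
    intro _
    simp only [Function.iterate_zero_apply]
    exact ⟨hx, rfl⟩
  | succ n ih =>
    intro hk
    obtain ⟨hmem, hdep⟩ := ih (by omega)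
    have hne : c.dep (c.par^[n] x) ≠ 1 := by omega
    have h1 := c.par_mem _ hmem hne
    have h2 := c.par_dep _ hmem hne
    rw [Function.iterate_succ_apply']
    exact ⟨h1, by omega⟩

/-- The level-1 ancestor of `x`. -/
def Conf.lv1 (c : Conf p s a b) (x : ℤ) : ℤ := c.par^[c.dep x - 1] x

theorem lv1_mem (c : Conf p s a b) (x : ℤ) (hx : x ∈ Finset.Icc a b) :
    c.lv1 x ∈ Finset.Icc a b ∧ c.dep (c.lv1 x) = 1 := by
  have hd := c.dep_pos x hx
  obtain ⟨h1, h2⟩ := chain_mem c x hx (c.dep x - 1) (by omega)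
  rw [Conf.lv1]
  exact ⟨h1, by omega⟩

theorem lv1_of_dep_one (c : Conf p s a b) (x : ℤ) (hd : c.dep x = 1) : c.lv1 x = x := by
  rw [Conf.lv1, hd]
  simp

theorem lv1_par (c : Conf p s a b) (x : ℤ) (hx : x ∈ Finset.Icc a b)
    (hd : c.dep x ≠ 1) : c.lv1 x = c.lv1 (c.par x) := by
  have hd1 := c.dep_pos x hx
  have h2 := c.par_dep x hx hd
  rw [Conf.lv1, Conf.lv1]
  have : c.dep x - 1 = (c.dep (c.par x) - 1) + 1 := by omega
  rw [this, Function.iterate_succ_apply]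

theorem lv1_iter (c : Conf p s a b) (x : ℤ) (hx : x ∈ Finset.Icc a b) :
    ∀ k : ℕ, k + 1 ≤ c.dep x → c.lv1 (c.par^[k] x) = c.lv1 x := by
  intro k
  induction k with
  | zero => intro _; rfl
  | succ n ih =>
    intro hk
    obtain ⟨hmem, hdep⟩ := chain_mem c x hx n (by omega)
    have hne : c.dep (c.par^[n] x) ≠ 1 := by omega
    rw [Function.iterate_succ_apply', ← lv1_par c _ hmem hne]
    exact ih (by omega)

end Chains

section Exchange
variable (f : ℤ → ℝ) {p : ℕ} {s a b : ℤ}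

/-- Reattach `w` to a new parent `q` of smaller depth, shifting the subtree of `w`. -/
theorem reattach (c : Conf p s a b) (w q : ℤ) (hw : w ∈ Finset.Icc a b)
    (hq : q ∈ Finset.Icc a b) (hdq : c.dep q < c.dep w) :
    ∃ c' : Conf p s a b,
      c'.cost f = c.cost f - |f w - f (c.par w)| + |f w - f q| := by
  classical
  set d : ℕ := c.dep w - 1 - c.dep q with hd
  set Sub : ℤ → Prop := fun x => c.dep w ≤ c.dep x ∧ c.par^[c.dep x - c.dep w] x = w
    with hSub
  have hSub_def : ∀ y, Sub y ↔ (c.dep w ≤ c.dep y ∧ c.par^[c.dep y - c.dep w] y = w) := by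
    intro y; rw [hSub]
  have hSubw : Sub w := (hSub_def w).2 ⟨le_refl _, by simp⟩
  have hSubq : ¬ Sub q := fun h => by
    have := ((hSub_def q).1 h).1; omega
  have hdw1 := c.dep_pos w hw
  have hdq1 := c.dep_pos q hq
  have hSubdep : ∀ x, x ≠ w → Sub x → c.dep w < c.dep x := by
    intro x hne hx
    obtain ⟨ha, hb⟩ := (hSub_def x).1 hx
    rcases Nat.lt_or_ge (c.dep w) (c.dep x) with h | h
    · exact h
    · exfalso
      have h0 : c.dep x - c.dep w = 0 := by omega
      rw [h0] at hb
      simp only [Function.iterate_zero_apply] at hb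
      exact hne hb
  have hSubpar : ∀ x, x ∈ Finset.Icc a b → x ≠ w → c.dep x ≠ 1 → (Sub x ↔ Sub (c.par x)) := by
    intro x hxm hne hne1
    have hpd := c.par_dep x hxm hne1
    constructor
    · intro hx
      obtain ⟨ha, hb⟩ := (hSub_def x).1 hx
      have hlt := hSubdep x hne hx
      refine (hSub_def (c.par x)).2 ⟨by omega, ?_⟩
      have heq : c.dep x - c.dep w = (c.dep (c.par x) - c.dep w) + 1 := by omega
      rw [heq, Function.iterate_succ_apply] at hb
      exact hb
    · intro hx
      obtain ⟨ha, hb⟩ := (hSub_def (c.par x)).1 hx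
      refine (hSub_def x).2 ⟨by omega, ?_⟩
      have heq : c.dep x - c.dep w = (c.dep (c.par x) - c.dep w) + 1 := by omega
      rw [heq, Function.iterate_succ_apply]
      exact hb
  refine ⟨⟨fun x => if x = w then q else c.par x,
    fun x => if Sub x then c.dep x - d else c.dep x, ?_, ?_, ?_, ?_, ?_⟩, ?_⟩
  · -- dep_pos
    intro x hx
    by_cases hS : Sub x
    · rw [if_pos hS]
      have := hS.1
      omega
    · rw [if_neg hS]
      exact c.dep_pos x hx
  · -- dep_le
    intro x hx
    by_cases hS : Sub x
    · rw [if_pos hS]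
      have := c.dep_le x hx
      omega
    · rw [if_neg hS]
      exact c.dep_le x hx
  · -- par_root
    intro x hx hd1
    by_cases hS : Sub x
    · rw [if_pos hS] at hd1
      exfalso
      by_cases hxw : x = w
      · subst hxw; omega
      · have := hSubdep x hxw hS; omega
    · rw [if_neg hS] at hd1
      have hxw : x ≠ w := by
        intro h; subst h; exact hS hSubw
      rw [if_neg hxw]
      exact c.par_root x hx hd1
  · -- par_mem
    intro x hx hd1
    by_cases hxw : x = w
    · rw [if_pos hxw]; exact hq
    rw [if_neg hxw]
    by_cases hS : Sub x
    · rw [if_pos hS] at hd1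
      have hlt := hSubdep x hxw hS
      exact c.par_mem x hx (by omega)
    · rw [if_neg hS] at hd1
      exact c.par_mem x hx hd1
  · -- par_dep
    intro x hx hd1
    by_cases hxw : x = w
    · subst hxw
      rw [if_pos rfl, if_pos hSubw, if_neg hSubq]
      omega
    rw [if_neg hxw]
    by_cases hS : Sub x
    · rw [if_pos hS] at hd1 ⊢
      have hlt := hSubdep x hxw hS
      have hne1 : c.dep x ≠ 1 := by omega
      have hpd := c.par_dep x hx hne1
      have hSp : Sub (c.par x) := (hSubpar x hx hxw hne1).1 hS
      rw [if_pos hSp]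
      omega
    · rw [if_neg hS] at hd1 ⊢
      have hne1 : c.dep x ≠ 1 := hd1
      have hSp : ¬ Sub (c.par x) := fun h => hS ((hSubpar x hx hxw hne1).2 h)
      rw [if_neg hSp]
      exact c.par_dep x hx hne1
  · -- cost
    rw [Conf.cost, Conf.cost]
    rw [← Finset.add_sum_erase _ _ hw, ← Finset.add_sum_erase _ _ hw]
    dsimp only
    rw [if_pos rfl]
    have : ∑ x ∈ (Finset.Icc a b).erase w, |f x - f (if x = w then q else c.par x)| =
        ∑ x ∈ (Finset.Icc a b).erase w, |f x - f (c.par x)| := by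
      refine Finset.sum_congr rfl fun x hx => ?_
      rw [if_neg (Finset.ne_of_mem_erase hx)]
    rw [this]
    ring

theorem abs_rearrange {x1 x2 y1 y2 : ℝ} (h1 : x1 ≤ x2) (h2 : y1 ≤ y2) :
    |x1 - y1| + |x2 - y2| ≤ |x1 - y2| + |x2 - y1| := by
  rcases abs_cases (x1 - y1) with ⟨e1, l1⟩ | ⟨e1, l1⟩ <;>
  rcases abs_cases (x2 - y2) with ⟨e2, l2⟩ | ⟨e2, l2⟩ <;>
  rcases abs_cases (x1 - y2) with ⟨e3, l3⟩ | ⟨e3, l3⟩ <;>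
  rcases abs_cases (x2 - y1) with ⟨e4, l4⟩ | ⟨e4, l4⟩ <;>
  rw [e1, e2, e3, e4] <;> linarith

/-- Swap the parents of two vertices at the same depth. -/
theorem swapConf (c : Conf p s a b) (w u : ℤ) (hw : w ∈ Finset.Icc a b)
    (hu : u ∈ Finset.Icc a b) (hne : w ≠ u) (hdep : c.dep w = c.dep u)
    (hd1 : c.dep w ≠ 1) :
    ∃ c' : Conf p s a b,
      c'.cost f = c.cost f - |f w - f (c.par w)| - |f u - f (c.par u)|
        + |f w - f (c.par u)| + |f u - f (c.par w)| ∧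
      c'.pot f = c.pot f - (f w - f (c.par w))^2 - (f u - f (c.par u))^2
        + (f w - f (c.par u))^2 + (f u - f (c.par w))^2 := by
  classical
  have hd1' : c.dep u ≠ 1 := by rw [← hdep]; exact hd1
  have hwm := c.par_mem w hw hd1
  have hum := c.par_mem u hu hd1'
  have hwd := c.par_dep w hw hd1
  have hud := c.par_dep u hu hd1'
  refine ⟨⟨fun x => if x = w then c.par u else if x = u then c.par w else c.par x,
    c.dep, c.dep_pos, c.dep_le, ?_, ?_, ?_⟩, ?_, ?_⟩
  · intro x hx hxd
    rw [if_neg (by rintro rfl; exact hd1 hxd), if_neg (by rintro rfl; exact hd1' hxd)]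
    exact c.par_root x hx hxd
  · intro x hx hxd
    by_cases hxw : x = w
    · rw [if_pos hxw]; exact hum
    rw [if_neg hxw]
    by_cases hxu : x = u
    · rw [if_pos hxu]; exact hwm
    rw [if_neg hxu]
    exact c.par_mem x hx hxd
  · intro x hx hxd
    by_cases hxw : x = w
    · subst hxw; rw [if_pos rfl]; omega
    rw [if_neg hxw]
    by_cases hxu : x = u
    · subst hxu; rw [if_pos rfl]; omega
    rw [if_neg hxu]
    exact c.par_dep x hx hxd
  · -- cost
    rw [Conf.cost, Conf.cost]
    have huw : u ∈ (Finset.Icc a b).erase w :=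
      Finset.mem_erase.2 ⟨Ne.symm hne, hu⟩
    rw [← Finset.add_sum_erase _ _ hw, ← Finset.add_sum_erase _ _ huw,
      ← Finset.add_sum_erase _ (fun x => |f x - f (c.par x)|) hw,
      ← Finset.add_sum_erase _ (fun x => |f x - f (c.par x)|) huw]
    dsimp only
    rw [if_pos rfl, if_neg (Ne.symm hne), if_pos rfl]
    have hcongr : ∑ x ∈ ((Finset.Icc a b).erase w).erase u,
        |f x - f (if x = w then c.par u else if x = u then c.par w else c.par x)| =
        ∑ x ∈ ((Finset.Icc a b).erase w).erase u, |f x - f (c.par x)| := by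
      refine Finset.sum_congr rfl fun x hx => ?_
      have h1 : x ≠ u := Finset.ne_of_mem_erase hx
      have h2 : x ≠ w := Finset.ne_of_mem_erase (Finset.mem_of_mem_erase hx)
      rw [if_neg h2, if_neg h1]
    rw [hcongr]
    ring
  · -- pot
    rw [Conf.pot, Conf.pot]
    have huw : u ∈ (Finset.Icc a b).erase w :=
      Finset.mem_erase.2 ⟨Ne.symm hne, hu⟩
    rw [← Finset.add_sum_erase _ _ hw, ← Finset.add_sum_erase _ _ huw,
      ← Finset.add_sum_erase _ (fun x => (f x - f (c.par x))^2) hw,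
      ← Finset.add_sum_erase _ (fun x => (f x - f (c.par x))^2) huw]
    dsimp only
    rw [if_pos rfl, if_neg (Ne.symm hne), if_pos rfl]
    have hcongr : ∑ x ∈ ((Finset.Icc a b).erase w).erase u,
        (f x - f (if x = w then c.par u else if x = u then c.par w else c.par x))^2 =
        ∑ x ∈ ((Finset.Icc a b).erase w).erase u, (f x - f (c.par x))^2 := by
      refine Finset.sum_congr rfl fun x hx => ?_
      have h1 : x ≠ u := Finset.ne_of_mem_erase hx
      have h2 : x ≠ w := Finset.ne_of_mem_erase (Finset.mem_of_mem_erase hx)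
      rw [if_neg h2, if_neg h1]
    rw [hcongr]
    ring

end Exchange

section Extraction
variable (f : ℤ → ℝ) {p : ℕ} {s a b : ℤ}

theorem extraction (hf : StrictMono f) (c : Conf p s a b) (hab : a ≤ b)
    (hs : s ∉ Finset.Icc a b) (hp : 2 ≤ p)
    (hmin : ∀ c' : Conf p s a b, c.cost f ≤ c'.cost f)
    (hpot : ∀ c' : Conf p s a b, c'.cost f = c.cost f → c.pot f ≤ c'.pot f) :
    ∃ s' ∈ Finset.Icc a b, ∃ c' ∈ Finset.Icc a s',
      ∃ (C1 : Conf p s a (c'-1)) (C2 : Conf (p-1) s' c' (s'-1)) (C3 : Conf (p-1) s' (s'+1) b),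
        c.cost f = |f s' - f s| + C1.cost f + C2.cost f + C3.cost f := by
  classical
  -- Optimality property O: no vertex of smaller depth strictly between a vertex and its parent
  have HO : ∀ w ∈ Finset.Icc a b, ∀ q ∈ Finset.Icc a b, c.dep q < c.dep w →
      ¬(w < q ∧ q < c.par w) ∧ ¬(c.par w < q ∧ q < w) := by
    intro w hw q hq hdq
    constructor
    · rintro ⟨h1, h2⟩
      obtain ⟨c', hc'⟩ := reattach f c w q hw hq hdq
      have hb1 : f w < f q := hf h1
      have hb2 : f q < f (c.par w) := hf h2
      have habs : |f w - f q| < |f w - f (c.par w)| := by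
        rw [abs_of_nonpos (by linarith), abs_of_nonpos (by linarith)]
        linarith
      have := hmin c'
      rw [hc'] at this
      linarith
    · rintro ⟨h1, h2⟩
      obtain ⟨c', hc'⟩ := reattach f c w q hw hq hdq
      have hb1 : f (c.par w) < f q := hf h1
      have hb2 : f q < f w := hf h2
      have habs : |f w - f q| < |f w - f (c.par w)| := by
        rw [abs_of_nonneg (by linarith), abs_of_nonneg (by linarith)]
        linarith
      have := hmin c'
      rw [hc'] at this
      linarith
  -- Optimality property M: parents are monotone at each level
  have HM : ∀ w ∈ Finset.Icc a b, ∀ u ∈ Finset.Icc a b, w < u → c.dep w = c.dep u →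
      c.par w ≤ c.par u := by
    intro w hw u hu hwu hdep
    by_contra hcon
    push_neg at hcon
    by_cases hd1 : c.dep w = 1
    · have e1 := c.par_root w hw hd1
      have e2 := c.par_root u hu (by omega)
      rw [e1, e2] at hcon
      exact lt_irrefl _ hcon
    · obtain ⟨c', hcost', hpot'⟩ := swapConf f c w u hw hu (ne_of_lt hwu) hdep hd1
      have hfw : f w < f u := hf hwu
      have hfp : f (c.par u) < f (c.par w) := hf hcon
      have hre := abs_rearrange (le_of_lt hfw) (le_of_lt hfp)
      have hle : c'.cost f ≤ c.cost f := by rw [hcost']; linarith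
      have heq : c'.cost f = c.cost f := le_antisymm hle (hmin c')
      have hp2 := hpot c' heq
      have hkey : (f w - f (c.par u))^2 + (f u - f (c.par w))^2 <
          (f w - f (c.par w))^2 + (f u - f (c.par u))^2 := by
        nlinarith [mul_pos (sub_pos.2 hfw) (sub_pos.2 hfp)]
      rw [hpot'] at hp2
      linarith
  -- the rightmost depth-1 vertex s'
  have hIa : a ∈ Finset.Icc a b := Finset.mem_Icc.2 ⟨le_refl a, hab⟩
  have hL1a : c.lv1 a ∈ (Finset.Icc a b).filter (fun z => c.dep z = 1) := by
    obtain ⟨h1, h2⟩ := lv1_mem c a hIa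
    exact Finset.mem_filter.2 ⟨h1, h2⟩
  have hL1ne : ((Finset.Icc a b).filter (fun z => c.dep z = 1)).Nonempty := ⟨_, hL1a⟩
  set s' := ((Finset.Icc a b).filter (fun z => c.dep z = 1)).max' hL1ne with hs'def
  have hs'I : s' ∈ Finset.Icc a b := (Finset.mem_filter.1 (Finset.max'_mem _ hL1ne)).1
  have hs'dep : c.dep s' = 1 := (Finset.mem_filter.1 (Finset.max'_mem _ hL1ne)).2
  have hs'max : ∀ x ∈ Finset.Icc a b, c.dep x = 1 → x ≤ s' := by
    intro x hx hd
    exact Finset.le_max' _ x (Finset.mem_filter.2 ⟨hx, hd⟩)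
  obtain ⟨hs'a, hs'b⟩ := Finset.mem_Icc.1 hs'I
  -- F2: parents of left vertices stay at or left of s'
  have F2 : ∀ x ∈ Finset.Icc a b, x < s' → c.dep x ≠ 1 →
      a ≤ c.par x ∧ c.par x ≤ s' := by
    intro x hx hxs hd1
    have hm := c.par_mem x hx hd1
    obtain ⟨hm1, hm2⟩ := Finset.mem_Icc.1 hm
    refine ⟨hm1, ?_⟩
    by_contra hcon
    push_neg at hcon
    have hdd : c.dep s' < c.dep x := by
      have := c.dep_pos x hx; omega
    exact (HO x hx s' hs'I hdd).1 ⟨hxs, hcon⟩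
  -- F1: right vertices have depth ≥ 2 and parents at or right of s'
  have F1 : ∀ x ∈ Finset.Icc a b, s' < x →
      c.dep x ≠ 1 ∧ s' ≤ c.par x ∧ c.par x ≤ b := by
    intro x hx hxs
    have hd1 : c.dep x ≠ 1 := by
      intro h
      have := hs'max x hx h; omega
    have hm := c.par_mem x hx hd1
    obtain ⟨hm1, hm2⟩ := Finset.mem_Icc.1 hm
    refine ⟨hd1, ?_, hm2⟩
    by_contra hcon
    push_neg at hcon
    have hdd : c.dep s' < c.dep x := by
      have := c.dep_pos x hx; omega
    exact (HO x hx s' hs'I hdd).2 ⟨hcon, hxs⟩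
  -- chains of left vertices stay at or left of s'
  have chainLe : ∀ x ∈ Finset.Icc a b, x ≤ s' → ∀ k : ℕ, k + 1 ≤ c.dep x →
      c.par^[k] x ≤ s' := by
    intro x hx hxs k
    induction k with
    | zero =>
      intro _
      simpa using hxs
    | succ n ih =>
      intro hk
      obtain ⟨hmem, hdep⟩ := chain_mem c x hx n (by omega)
      have hzs : c.par^[n] x ≤ s' := ih (by omega)
      have hzlt : c.par^[n] x < s' := by
        rcases eq_or_lt_of_le hzs with h | h
        · exfalso
          rw [h] at hdep
          omega
        · exact h
      rw [Function.iterate_succ_apply']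
      exact (F2 _ hmem hzlt (by omega)).2
  -- F3: right vertices all hang below s'
  have F3 : ∀ n : ℕ, ∀ x ∈ Finset.Icc a b, s' ≤ x → c.dep x ≤ n → c.lv1 x = s' := by
    intro n
    induction n with
    | zero =>
      intro x hx _ h0
      have := c.dep_pos x hx; omega
    | succ n ih =>
      intro x hx hsx hdn
      rcases eq_or_lt_of_le hsx with h | h
      · rw [← h]
        rw [lv1_of_dep_one c s' hs'dep]
      · obtain ⟨hd1, hp1, hp2⟩ := F1 x hx h
        have hpm : c.par x ∈ Finset.Icc a b := c.par_mem x hx hd1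
        have hpd := c.par_dep x hx hd1
        rw [lv1_par c x hx hd1]
        exact ih (c.par x) hpm hp1 (by omega)
  -- the suffix property
  have suffix : ∀ x ∈ Finset.Icc a b, ∀ y ∈ Finset.Icc a b, x < y → y < s' →
      c.lv1 x = s' → c.lv1 y = s' := by
    intro x hx y hy hxy hys hlx
    by_contra hly
    have hxs : x < s' := lt_trans hxy hys
    have hdx1 := c.dep_pos x hx
    have hdy1 := c.dep_pos y hy
    -- facts about the two chains
    have hXfact : ∀ d : ℕ, 1 ≤ d → d ≤ c.dep x →
        c.par^[c.dep x - d] x ∈ Finset.Icc a b ∧ c.dep (c.par^[c.dep x - d] x) = d ∧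
        c.lv1 (c.par^[c.dep x - d] x) = s' ∧ c.par^[c.dep x - d] x ≤ s' := by
      intro d h1 h2
      obtain ⟨hm, hd⟩ := chain_mem c x hx (c.dep x - d) (by omega)
      refine ⟨hm, by omega, ?_, ?_⟩
      · rw [lv1_iter c x hx (c.dep x - d) (by omega)]
        exact hlx
      · exact chainLe x hx (le_of_lt hxs) (c.dep x - d) (by omega)
    have hYfact : ∀ d : ℕ, 1 ≤ d → d ≤ c.dep y →
        c.par^[c.dep y - d] y ∈ Finset.Icc a b ∧ c.dep (c.par^[c.dep y - d] y) = d ∧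
        c.lv1 (c.par^[c.dep y - d] y) = c.lv1 y ∧ c.par^[c.dep y - d] y < s' := by
      intro d h1 h2
      obtain ⟨hm, hd⟩ := chain_mem c y hy (c.dep y - d) (by omega)
      have hlv : c.lv1 (c.par^[c.dep y - d] y) = c.lv1 y := by
        rw [lv1_iter c y hy (c.dep y - d) (by omega)]
      refine ⟨hm, by omega, hlv, ?_⟩
      have hle : c.par^[c.dep y - d] y ≤ s' := chainLe y hy (le_of_lt hys) (c.dep y - d) (by omega)
      rcases eq_or_lt_of_le hle with h | h
      · exfalso
        apply hly
        rw [← hlv, h, lv1_of_dep_one c s' hs'dep]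
      · exact h
    have hpair : ∀ d : ℕ, 1 ≤ d → d ≤ c.dep x → d ≤ c.dep y →
        c.par^[c.dep x - d] x ≠ c.par^[c.dep y - d] y := by
      intro d h1 h2 h3 heq
      apply hly
      rw [← (hYfact d h1 h3).2.2.1, ← heq, (hXfact d h1 h2).2.2.1]
    have hYnex : ∀ d : ℕ, 1 ≤ d → d ≤ c.dep y → c.par^[c.dep y - d] y ≠ x := by
      intro d h1 h2 heq
      apply hly
      rw [← (hYfact d h1 h2).2.2.1, heq, hlx]
    have hXney : ∀ d : ℕ, 1 ≤ d → d ≤ c.dep x → c.par^[c.dep x - d] x ≠ y := by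
      intro d h1 h2 heq
      apply hly
      rw [← heq, (hXfact d h1 h2).2.2.1]
    have hXpar : ∀ d : ℕ, 2 ≤ d → d ≤ c.dep x →
        c.par (c.par^[c.dep x - d] x) = c.par^[c.dep x - (d-1)] x := by
      intro d h1 h2
      have heq : c.dep x - (d-1) = (c.dep x - d) + 1 := by omega
      rw [heq, Function.iterate_succ_apply']
    have hYpar : ∀ d : ℕ, 2 ≤ d → d ≤ c.dep y →
        c.par (c.par^[c.dep y - d] y) = c.par^[c.dep y - (d-1)] y := by
      intro d h1 h2
      have heq : c.dep y - (d-1) = (c.dep y - d) + 1 := by omega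
      rw [heq, Function.iterate_succ_apply']
    set D := min (c.dep x) (c.dep y) with hD
    have hD1 : 1 ≤ D := by omega
    have hDx : D ≤ c.dep x := by omega
    have hDy : D ≤ c.dep y := by omega
    -- base case of the descent
    have hbase : c.par^[c.dep x - D] x < c.par^[c.dep y - D] y := by
      rcases le_or_gt (c.dep x) (c.dep y) with hc | hc
      · have hXD : c.par^[c.dep x - D] x = x := by
          have h0 : c.dep x - D = 0 := by omega
          rw [h0]
          simp
        rw [hXD]
        have hne := hYnex D hD1 hDy
        rcases lt_trichotomy (c.par^[c.dep y - D] y) x with hlt | heq | hgt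
        · exfalso
          have hDlt : D < c.dep y := by
            by_contra hcc
            have h0 : c.dep y - D = 0 := by omega
            rw [h0] at hlt
            simp at hlt
            omega
          set E := (Finset.Icc (D+1) (c.dep y)).filter
            (fun d => x < c.par^[c.dep y - d] y) with hE
          have hDyE : c.dep y ∈ E := by
            refine Finset.mem_filter.2 ⟨Finset.mem_Icc.2 ⟨by omega, le_refl _⟩, ?_⟩
            have h0 : c.dep y - c.dep y = 0 := by omega
            rw [h0]
            simpa using hxy
          have hEne : E.Nonempty := ⟨_, hDyE⟩
          set e := E.min' hEne with he
          have heE := E.min'_mem hEne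
          obtain ⟨heI, heP⟩ := Finset.mem_filter.1 heE
          obtain ⟨he1, he2⟩ := Finset.mem_Icc.1 heI
          have hprev : c.par^[c.dep y - (e-1)] y < x := by
            rcases eq_or_lt_of_le (by omega : D ≤ e - 1) with h | h
            · rw [← h]
              exact hlt
            · have hnotE : e - 1 ∉ E := by
                intro hmem
                have := E.min'_le _ hmem
                omega
              have : ¬ (x < c.par^[c.dep y - (e-1)] y) := by
                intro hcc
                exact hnotE (Finset.mem_filter.2 ⟨Finset.mem_Icc.2 ⟨by omega, by omega⟩, hcc⟩)
              have hne2 := hYnex (e-1) (by omega) (by omega)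
              omega
            
          have hw := hYfact e (by omega) he2
          have hHO := (HO _ hw.1 x hx (by omega)).2
          apply hHO
          constructor
          · rw [hYpar e (by omega) he2]
            exact hprev
          · exact heP
        · exact absurd heq hne
        · exact hgt
      · have hYD : c.par^[c.dep y - D] y = y := by
          have h0 : c.dep y - D = 0 := by omega
          rw [h0]
          simp
        rw [hYD]
        have hne := hXney D hD1 hDx
        rcases lt_trichotomy y (c.par^[c.dep x - D] x) with hgt | heq | hlt
        · exfalso
          have hDlt : D < c.dep x := by omega
          set E := (Finset.Icc (D+1) (c.dep x)).filter
            (fun d => c.par^[c.dep x - d] x < y) with hE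
          have hDxE : c.dep x ∈ E := by
            refine Finset.mem_filter.2 ⟨Finset.mem_Icc.2 ⟨by omega, le_refl _⟩, ?_⟩
            have h0 : c.dep x - c.dep x = 0 := by omega
            rw [h0]
            simpa using hxy
          have hEne : E.Nonempty := ⟨_, hDxE⟩
          set e := E.min' hEne with he
          have heE := E.min'_mem hEne
          obtain ⟨heI, heP⟩ := Finset.mem_filter.1 heE
          obtain ⟨he1, he2⟩ := Finset.mem_Icc.1 heI
          have hprev : y < c.par^[c.dep x - (e-1)] x := by
            rcases eq_or_lt_of_le (by omega : D ≤ e - 1) with h | h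
            · rw [← h]
              exact hgt
            · have hnotE : e - 1 ∉ E := by
                intro hmem
                have := E.min'_le _ hmem
                omega
              have : ¬ (c.par^[c.dep x - (e-1)] x < y) := by
                intro hcc
                exact hnotE (Finset.mem_filter.2 ⟨Finset.mem_Icc.2 ⟨by omega, by omega⟩, hcc⟩)
              have hne2 := hXney (e-1) (by omega) (by omega)
              omega
          have hw := hXfact e (by omega) he2
          have hHO := (HO _ hw.1 y hy (by omega)).1
          apply hHO
          constructor
          · exact heP
          · rw [hXpar e (by omega) he2]
            exact hprev
        · exact absurd heq.symm hne
        · exact hlt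
    -- descent to level 1
    have hdesc : ∀ j : ℕ, j ≤ D - 1 →
        c.par^[c.dep x - (D - j)] x < c.par^[c.dep y - (D - j)] y := by
      intro j
      induction j with
      | zero =>
        intro _
        simpa using hbase
      | succ n ih =>
        intro hj
        have hd := ih (by omega)
        have hd2 : 2 ≤ D - n := by omega
        have hfx := hXfact (D - n) (by omega) (by omega)
        have hfy := hYfact (D - n) (by omega) (by omega)
        have hmono := HM _ hfx.1 _ hfy.1 hd (by omega)
        rw [hXpar (D - n) hd2 (by omega), hYpar (D - n) hd2 (by omega)] at hmono
        have hne := hpair (D - n - 1) (by omega) (by omega) (by omega)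
        have hidx : D - (n + 1) = D - n - 1 := by omega
        rw [hidx]
        omega
    have hfin := hdesc (D - 1) (le_refl _)
    have hidx : D - (D - 1) = 1 := by omega
    rw [hidx] at hfin
    have hX1 : c.par^[c.dep x - 1] x = s' := by
      have h := hXfact 1 (le_refl _) (by omega)
      have : c.lv1 (c.par^[c.dep x - 1] x) = c.par^[c.dep x - 1] x :=
        lv1_of_dep_one c _ h.2.1
      rw [← this, h.2.2.1]
    have hY1 : c.par^[c.dep y - 1] y < s' := (hYfact 1 (le_refl _) (by omega)).2.2.2
    rw [hX1] at hfin
    omega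
  -- the split point c'
  set B' := (Finset.Icc a (s'-1)).filter (fun z => c.lv1 z = s') with hB'
  set c'val := if h : B'.Nonempty then B'.min' h else s' with hc'val
  have hc'bounds : a ≤ c'val ∧ c'val ≤ s' := by
    rw [hc'val]
    split_ifs with h
    · have := B'.min'_mem h
      obtain ⟨h1, _⟩ := Finset.mem_filter.1 this
      obtain ⟨h2, h3⟩ := Finset.mem_Icc.1 h1
      omega
    · omega
  have hchar : ∀ y ∈ Finset.Icc a b, y < s' → (c.lv1 y = s' ↔ c'val ≤ y) := by
    intro y hy hys
    obtain ⟨hy1, hy2⟩ := Finset.mem_Icc.1 hy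
    constructor
    · intro h
      have hyB : y ∈ B' := Finset.mem_filter.2 ⟨Finset.mem_Icc.2 ⟨hy1, by omega⟩, h⟩
      have hne : B'.Nonempty := ⟨y, hyB⟩
      rw [hc'val, dif_pos hne]
      exact B'.min'_le y hyB
    · intro h
      by_cases hne : B'.Nonempty
      · rw [hc'val, dif_pos hne] at h
        have hmin' := B'.min'_mem hne
        obtain ⟨hm1, hm2⟩ := Finset.mem_filter.1 hmin'
        obtain ⟨hm3, hm4⟩ := Finset.mem_Icc.1 hm1
        rcases eq_or_lt_of_le h with heq | hlt
        · rw [← heq]; exact hm2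
        · exact suffix _ (Finset.mem_Icc.2 ⟨hm3, by omega⟩) y hy hlt hys hm2
      · rw [hc'val, dif_neg hne] at h
        omega
  obtain ⟨hcb1, hcb2⟩ := hc'bounds
  -- memberships for the three blocks
  have memC1 : ∀ x ∈ Finset.Icc a (c'val - 1),
      x ∈ Finset.Icc a b ∧ x < s' ∧ c.lv1 x ≠ s' := by
    intro x hx
    obtain ⟨h1, h2⟩ := Finset.mem_Icc.1 hx
    have hxI : x ∈ Finset.Icc a b := Finset.mem_Icc.2 ⟨h1, by omega⟩
    have hxs : x < s' := by omega
    refine ⟨hxI, hxs, ?_⟩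
    intro h
    have := (hchar x hxI hxs).1 h
    omega
  have memC2 : ∀ x ∈ Finset.Icc c'val (s'-1),
      x ∈ Finset.Icc a b ∧ x < s' ∧ c.lv1 x = s' ∧ 2 ≤ c.dep x := by
    intro x hx
    obtain ⟨h1, h2⟩ := Finset.mem_Icc.1 hx
    have hxI : x ∈ Finset.Icc a b := Finset.mem_Icc.2 ⟨by omega, by omega⟩
    have hxs : x < s' := by omega
    have hlv : c.lv1 x = s' := (hchar x hxI hxs).2 (by omega)
    refine ⟨hxI, hxs, hlv, ?_⟩
    by_contra hcc
    have hd1 : c.dep x = 1 := by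
      have := c.dep_pos x hxI; omega
    rw [lv1_of_dep_one c x hd1] at hlv
    omega
  have memC3 : ∀ x ∈ Finset.Icc (s'+1) b,
      x ∈ Finset.Icc a b ∧ s' < x ∧ c.lv1 x = s' ∧ 2 ≤ c.dep x := by
    intro x hx
    obtain ⟨h1, h2⟩ := Finset.mem_Icc.1 hx
    have hxI : x ∈ Finset.Icc a b := Finset.mem_Icc.2 ⟨by omega, h2⟩
    have hxs : s' < x := by omega
    obtain ⟨hd1, _, _⟩ := F1 x hxI hxs
    have hdd : 2 ≤ c.dep x := by
      have := c.dep_pos x hxI; omega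
    exact ⟨hxI, hxs, F3 (c.dep x) x hxI (le_of_lt hxs) (le_refl _), hdd⟩
  -- helper: lv1 at depth two is the parent
  have lv1_two : ∀ x ∈ Finset.Icc a b, c.dep x = 2 → c.lv1 x = c.par x := by
    intro x hx hd
    rw [Conf.lv1, hd]
    norm_num
  clear_value s' c'val
  have hsplit : c.cost f = |f s' - f s|
      + (∑ x ∈ Finset.Icc a (c'val-1), |f x - f (c.par x)|)
      + (∑ x ∈ Finset.Icc c'val (s'-1), |f x - f (c.par x)|)
      + (∑ x ∈ Finset.Icc (s'+1) b, |f x - f (c.par x)|) := by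
    rw [Conf.cost]
    rw [sum_Icc_split _ a (s'-1) b (by omega) (by omega)]
    rw [sum_Icc_split _ a (c'val-1) (s'-1) (by omega) (by omega)]
    rw [show c'val - 1 + 1 = c'val from by ring, show s' - 1 + 1 = s' from by ring]
    rw [sum_Icc_split _ s' s' b (by omega) (by omega)]
    rw [Finset.Icc_self, Finset.sum_singleton]
    rw [c.par_root s' hs'I hs'dep]
    ring
  refine ⟨s', hs'I, c'val, Finset.mem_Icc.2 ⟨hcb1, hcb2⟩,
    ⟨c.par, c.dep, ?_, ?_, ?_, ?_, ?_⟩,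
    ⟨c.par, fun z => c.dep z - 1, ?_, ?_, ?_, ?_, ?_⟩,
    ⟨c.par, fun z => c.dep z - 1, ?_, ?_, ?_, ?_, ?_⟩, ?_⟩
  · -- C1 dep_pos
    intro x hx
    exact c.dep_pos x (memC1 x hx).1
  · intro x hx
    exact c.dep_le x (memC1 x hx).1
  · intro x hx hd
    exact c.par_root x (memC1 x hx).1 hd
  · -- C1 par_mem
    intro x hx hd
    obtain ⟨hxI, hxs, hlv⟩ := memC1 x hx
    obtain ⟨hp1, hp2⟩ := F2 x hxI hxs hd
    have hplv : c.lv1 (c.par x) = c.lv1 x := (lv1_par c x hxI hd).symm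
    have hpne : c.par x ≠ s' := by
      intro h
      apply hlv
      rw [← hplv, h, lv1_of_dep_one c s' hs'dep]
    have hps : c.par x < s' := by omega
    have hnc : ¬ (c'val ≤ c.par x) := by
      intro h
      apply hlv
      rw [← hplv]
      exact (hchar (c.par x) (c.par_mem x hxI hd) hps).2 h
    exact Finset.mem_Icc.2 ⟨hp1, by omega⟩
  · intro x hx hd
    exact c.par_dep x (memC1 x hx).1 hd
  · -- C2 dep_pos
    intro x hx
    have := (memC2 x hx).2.2.2
    omega
  · -- C2 dep_le
    intro x hx
    have := c.dep_le x (memC2 x hx).1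
    omega
  · -- C2 par_root
    intro x hx hd
    obtain ⟨hxI, hxs, hlv, hd2⟩ := memC2 x hx
    have hdx2 : c.dep x = 2 := by omega
    rw [← lv1_two x hxI hdx2]
    exact hlv
  · -- C2 par_mem
    intro x hx hd
    obtain ⟨hxI, hxs, hlv, hd2⟩ := memC2 x hx
    have hd3 : 3 ≤ c.dep x := by omega
    have hne1 : c.dep x ≠ 1 := by omega
    obtain ⟨hp1, hp2⟩ := F2 x hxI hxs hne1
    have hpd := c.par_dep x hxI hne1
    have hpne : c.par x ≠ s' := by
      intro h
      rw [h] at hpd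
      omega
    have hps : c.par x < s' := by omega
    have hplv : c.lv1 (c.par x) = s' := by
      rw [← lv1_par c x hxI hne1]
      exact hlv
    have := (hchar (c.par x) (c.par_mem x hxI hne1) hps).1 hplv
    exact Finset.mem_Icc.2 ⟨this, by omega⟩
  · -- C2 par_dep
    intro x hx hd
    obtain ⟨hxI, hxs, hlv, hd2⟩ := memC2 x hx
    have hd3 : 3 ≤ c.dep x := by omega
    have hpd := c.par_dep x hxI (by omega)
    omega
  · -- C3 dep_pos
    intro x hx
    have := (memC3 x hx).2.2.2
    omega
  · intro x hx
    have := c.dep_le x (memC3 x hx).1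
    omega
  · -- C3 par_root
    intro x hx hd
    obtain ⟨hxI, hxs, hlv, hd2⟩ := memC3 x hx
    have hdx2 : c.dep x = 2 := by omega
    rw [← lv1_two x hxI hdx2]
    exact hlv
  · -- C3 par_mem
    intro x hx hd
    obtain ⟨hxI, hxs, hlv, hd2⟩ := memC3 x hx
    have hd3 : 3 ≤ c.dep x := by omega
    have hne1 : c.dep x ≠ 1 := by omega
    obtain ⟨_, hp1, hp2⟩ := F1 x hxI hxs
    have hpd := c.par_dep x hxI hne1
    have hpne : c.par x ≠ s' := by
      intro h
      rw [h] at hpd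
      omega
    exact Finset.mem_Icc.2 ⟨by omega, hp2⟩
  · -- C3 par_dep
    intro x hx hd
    obtain ⟨hxI, hxs, hlv, hd2⟩ := memC3 x hx
    have hpd := c.par_dep x hxI (by omega)
    omega
  · -- the cost decomposition
    exact hsplit
end Extraction

end Stmt13

/-- base cases and the recurrence of the line DP:
A[p,s,a,b] = 0 for a > b; A[1,s,a,b] = Σ_{x ∈ [a,b]} d(v_s, v_x); and for
p > 1, a ≤ b,
A[p,s,a,b] = min_{s' ∈ [a,b], c ∈ [a,s']}
  ( d(v_{s'}, v_s) + A[p,s,a,c-1] + A[p-1,s',c,s'-1] + A[p-1,s',s'+1,b] ). -/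
theorem stmt13 (f : ℤ → ℝ) (hf : StrictMono f) (s a b : ℤ)
    (hs : s ∉ Finset.Icc a b) :
    (b < a → ∀ p : ℕ, lineA f p s a b = 0) ∧
    (lineA f 1 s a b = ∑ x ∈ Finset.Icc a b, |f s - f x|) ∧
    (∀ p : ℕ, 1 < p → a ≤ b →
      lineA f p s a b =
        sInf {c : ℝ | ∃ s' ∈ Finset.Icc a b, ∃ c' ∈ Finset.Icc a s',
          c = |f s' - f s| + lineA f p s a (c' - 1) +
              lineA f (p - 1) s' c' (s' - 1) + lineA f (p - 1) s' (s' + 1) b}) := by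
  refine ⟨fun hba p => Stmt13.lineA_empty f p s a b hba, Stmt13.lineA_one f s a b hs, ?_⟩
  intro p hp hab
  have hp2 : 2 ≤ p := hp
  apply le_antisymm
  · -- lineA ≤ sInf of the recurrence set
    apply le_csInf
    · exact ⟨_, a, Finset.mem_Icc.2 ⟨le_refl a, hab⟩, a,
        Finset.mem_Icc.2 ⟨le_refl a, le_refl a⟩, rfl⟩
    · rintro r ⟨s', hs', c', hc', rfl⟩
      obtain ⟨hs'a, hs'b⟩ := Finset.mem_Icc.1 hs'
      obtain ⟨hca, hcb⟩ := Finset.mem_Icc.1 hc'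
      have hsub1 : s ∉ Finset.Icc a (c'-1) := fun h => by
        obtain ⟨u, v⟩ := Finset.mem_Icc.1 h
        exact hs (Finset.mem_Icc.2 ⟨u, by omega⟩)
      have hsub2 : s' ∉ Finset.Icc c' (s'-1) := fun h => by
        obtain ⟨u, v⟩ := Finset.mem_Icc.1 h
        omega
      have hsub3 : s' ∉ Finset.Icc (s'+1) b := fun h => by
        obtain ⟨u, v⟩ := Finset.mem_Icc.1 h
        omega
      obtain ⟨C1, hC1⟩ := Stmt13.lineA_attained f (by omega : 1 ≤ p) hsub1
      obtain ⟨C2, hC2⟩ := Stmt13.lineA_attained f (by omega : 1 ≤ p - 1) hsub2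
      obtain ⟨C3, hC3⟩ := Stmt13.lineA_attained f (by omega : 1 ≤ p - 1) hsub3
      have hg := Stmt13.glueConf_cost f hp2 hs' hc' C1 C2 C3
      have hle := Stmt13.lineA_le_cost f hs (Stmt13.glueConf hp2 hs' hc' C1 C2 C3)
      rw [hg, hC1, hC2, hC3] at hle
      exact hle
  · -- sInf of the recurrence set ≤ lineA
    obtain ⟨c, hmin, hpot⟩ := Stmt13.exists_lexmin f p s a b (by omega)
    obtain ⟨s', hs', c', hc', C1, C2, C3, hdec⟩ :=
      Stmt13.extraction f hf c hab hs hp2 hmin hpot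
    obtain ⟨hs'a, hs'b⟩ := Finset.mem_Icc.1 hs'
    obtain ⟨hca, hcb⟩ := Finset.mem_Icc.1 hc'
    have hbdd : BddBelow {c : ℝ | ∃ s' ∈ Finset.Icc a b, ∃ c' ∈ Finset.Icc a s',
        c = |f s' - f s| + lineA f p s a (c' - 1) +
            lineA f (p - 1) s' c' (s' - 1) + lineA f (p - 1) s' (s' + 1) b} := by
      refine ⟨0, ?_⟩
      rintro r ⟨t, -, u, -, rfl⟩
      have h1 := abs_nonneg (f t - f s)
      have h2 := Stmt13.lineA_nonneg f p s a (u - 1)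
      have h3 := Stmt13.lineA_nonneg f (p-1) t u (t - 1)
      have h4 := Stmt13.lineA_nonneg f (p-1) t (t + 1) b
      linarith
    have hmem : |f s' - f s| + lineA f p s a (c' - 1) +
        lineA f (p - 1) s' c' (s' - 1) + lineA f (p - 1) s' (s' + 1) b ∈
        {c : ℝ | ∃ s' ∈ Finset.Icc a b, ∃ c' ∈ Finset.Icc a s',
          c = |f s' - f s| + lineA f p s a (c' - 1) +
              lineA f (p - 1) s' c' (s' - 1) + lineA f (p - 1) s' (s' + 1) b} :=
      ⟨s', hs', c', hc', rfl⟩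
    refine le_trans (csInf_le hbdd hmem) ?_
    have hsub1 : s ∉ Finset.Icc a (c'-1) := fun h => by
      obtain ⟨u, v⟩ := Finset.mem_Icc.1 h
      exact hs (Finset.mem_Icc.2 ⟨u, by omega⟩)
    have hsub2 : s' ∉ Finset.Icc c' (s'-1) := fun h => by
      obtain ⟨u, v⟩ := Finset.mem_Icc.1 h
      omega
    have hsub3 : s' ∉ Finset.Icc (s'+1) b := fun h => by
      obtain ⟨u, v⟩ := Finset.mem_Icc.1 h
      omega
    have h1 := Stmt13.lineA_le_cost f hsub1 C1
    have h2 := Stmt13.lineA_le_cost f hsub2 C2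
    have h3 := Stmt13.lineA_le_cost f hsub3 C3
    have hcle : c.cost f ≤ lineA f p s a b := by
      rw [Stmt13.lineA_eq_conf f p s a b hs]
      exact le_csInf (Stmt13.confSet_nonempty f p s a b (by omega))
        (by rintro r ⟨c', rfl⟩; exact hmin c')
    rw [hdec] at hcle
    linarith
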